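/- arXiv:2011.05371 — 2 statements merged into one kernel-verified Lean document; each statement's English description precedes it below -/
import Mathlib

section
/- Let G be a graph of minimum degree δ and w=(w_0,...,w_l) ∈ ℤ⁺ × ℕ^l with w_0 ≥ w_1 ≥ ... ≥ w_l. Then there exists a w-dominating function on G if and only if w_l ≤ lδ. -/
open scoped Classical
open Finset SimpleGraph

/-- A `w`-dominating function: `f : V → {0,…,l}` with `f(N(v)) ≥ w_{f(v)}` for all `v`. -/
def WDom {V : Type*} [Fintype V] (G : SimpleGraph V) {l : ℕ} (w : Fin (l+1) → ℕ)
    (f : V → Fin (l+1)) : Prop :=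
  ∀ v, w (f v) ≤ ∑ u, if G.Adj v u then (f u : ℕ) else 0

/-- The `w`-domination number. -/
noncomputable def gammaW {V : Type*} [Fintype V] (G : SimpleGraph V) {l : ℕ}
    (w : Fin (l+1) → ℕ) : ℕ :=
  sInf {n | ∃ f : V → Fin (l+1), WDom G w f ∧ ∑ v, (f v : ℕ) = n}

/-- The Italian domination number `γ_I = γ_{(2,0,0)}`. -/
noncomputable def gammaI {V : Type*} [Fintype V] (G : SimpleGraph V) : ℕ :=
  gammaW G ![2,0,0]

/-- The domination number. -/
noncomputable def gamma {V : Type*} [Fintype V] (G : SimpleGraph V) : ℕ :=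
  sInf {n | ∃ S : Finset V, (∀ v, v ∈ S ∨ ∃ u ∈ S, G.Adj u v) ∧ S.card = n}

/-- The total domination number. -/
noncomputable def gammaT {V : Type*} [Fintype V] (G : SimpleGraph V) : ℕ :=
  sInf {n | ∃ S : Finset V, (∀ v, ∃ u ∈ S, G.Adj u v) ∧ S.card = n}

/-- The 2-domination number. -/
noncomputable def gamma2 {V : Type*} [Fintype V] (G : SimpleGraph V) : ℕ :=
  sInf {n | ∃ S : Finset V, (∀ v ∉ S, 2 ≤ (S.filter (fun u => G.Adj u v)).card) ∧ S.card = n}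

/-- The double domination number. -/
noncomputable def gammaX2 {V : Type*} [Fintype V] (G : SimpleGraph V) : ℕ :=
  sInf {n | ∃ S : Finset V, (∀ v, 2 ≤ (S.filter (fun u => u = v ∨ G.Adj u v)).card) ∧ S.card = n}

/-- The double total domination number. -/
noncomputable def gammaX2T {V : Type*} [Fintype V] (G : SimpleGraph V) : ℕ :=
  sInf {n | ∃ S : Finset V, (∀ v, 2 ≤ (S.filter (fun u => G.Adj u v)).card) ∧ S.card = n}

/-- The lexicographic product `G ∘ H`. -/
def lexProd {V W : Type*} (G : SimpleGraph V) (H : SimpleGraph W) : SimpleGraph (V × W) where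
  Adj x y := G.Adj x.1 y.1 ∨ (x.1 = y.1 ∧ H.Adj x.2 y.2)
  symm := by
    constructor
    rintro x y (h | ⟨h1, h2⟩)
    · exact Or.inl h.symm
    · exact Or.inr ⟨h1.symm, h2.symm⟩
  loopless := by
    constructor
    rintro x (h | ⟨_, h⟩)
    · exact G.loopless.irrefl _ h
    · exact H.loopless.irrefl _ h

lemma sum_adj_const {V : Type*} [Fintype V] (G : SimpleGraph V) (v : V) (c : ℕ) :
    (∑ u, if G.Adj v u then c else 0) = c * G.degree v := by
  classical
  rw [← Finset.sum_filter, Finset.sum_const, smul_eq_mul, mul_comm]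
  congr 1
  rw [← SimpleGraph.card_neighborFinset_eq_degree]
  congr 1
  ext u
  simp [SimpleGraph.neighborFinset]

theorem exists_wDom_iff {V : Type*} [Fintype V] [Nonempty V] (G : SimpleGraph V)
    {l : ℕ} (w : Fin (l+1) → ℕ) (hw : Antitone w) (h0 : 1 ≤ w 0) :
    (∃ f : V → Fin (l+1), WDom G w f) ↔ w (Fin.last l) ≤ l * G.minDegree := by
  classical
  constructor
  · rintro ⟨f, hf⟩
    obtain ⟨v, hv⟩ := G.exists_minimal_degree_vertex
    calc w (Fin.last l) ≤ w (f v) := hw (Fin.le_last _)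
      _ ≤ ∑ u, if G.Adj v u then (f u : ℕ) else 0 := hf v
      _ ≤ ∑ u, if G.Adj v u then l else 0 := by
          apply Finset.sum_le_sum
          intro u _
          split
          · exact Nat.le_of_lt_succ (f u).isLt
          · exact le_refl _
      _ = l * G.degree v := sum_adj_const G v l
      _ = l * G.minDegree := by rw [hv]
  · intro h
    refine ⟨fun _ => Fin.last l, fun v => ?_⟩
    have h1 : (∑ u, if G.Adj v u then ((Fin.last l : Fin (l+1)) : ℕ) else 0)
        = l * G.degree v := by
      simpa using sum_adj_const G v l
    rw [h1]
    exact h.trans (Nat.mul_le_mul_left l (G.minDegree_le_degree v))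
end

section
/- For a graph G with no isolated vertex, γ_{(2,2,2)}(G) = 3 if and only if γ_{×2,t}(G) = 3. -/
open scoped Classical
open Finset SimpleGraph

lemma w222 (i : Fin 3) : ![2,2,2] i = 2 := by fin_cases i <;> rfl

lemma wdom_key {V : Type*} [Fintype V] (G : SimpleGraph V)
    {f : V → Fin 3} (hf : WDom G ![2,2,2] f) (a : V) :
    2 + (f a : ℕ) ≤ ∑ v, (f v : ℕ) := by
  have h := hf a
  rw [w222] at h
  rw [← Finset.sum_filter] at h
  have hsub : Finset.univ.filter (fun u => G.Adj a u) ⊆ Finset.univ.erase a := by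
    intro u hu
    simp only [Finset.mem_filter, Finset.mem_univ, true_and] at hu
    exact Finset.mem_erase.2 ⟨hu.ne', Finset.mem_univ u⟩
  have h2 : ∑ u ∈ Finset.univ.filter (fun u => G.Adj a u), (f u : ℕ)
      ≤ ∑ u ∈ Finset.univ.erase a, (f u : ℕ) := Finset.sum_le_sum_of_subset hsub
  have h3 : (f a : ℕ) + ∑ u ∈ Finset.univ.erase a, (f u : ℕ) = ∑ v, (f v : ℕ) :=
    Finset.add_sum_erase _ (fun u => (f u : ℕ)) (Finset.mem_univ a)
  omega

lemma wdom_lb {V : Type*} [Fintype V] [Nonempty V] (G : SimpleGraph V)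
    {f : V → Fin 3} (hf : WDom G ![2,2,2] f) : 3 ≤ ∑ v, (f v : ℕ) := by
  by_contra hlt
  push_neg at hlt
  have hz : ∀ a, (f a : ℕ) = 0 := fun a => by have := wdom_key G hf a; omega
  have h0 : ∑ v, (f v : ℕ) = 0 := Finset.sum_eq_zero fun v _ => hz v
  have := wdom_key G hf (Classical.arbitrary V)
  omega

lemma x2t_lb {V : Type*} [Fintype V] [Nonempty V] {G : SimpleGraph V} (S : Finset V)
    (hS : ∀ v, 2 ≤ (S.filter (fun u => G.Adj u v)).card) : 3 ≤ S.card := by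
  have h0 := hS (Classical.arbitrary V)
  have hpos : 0 < S.card :=
    lt_of_lt_of_le (by omega) (le_trans h0 (Finset.card_le_card (Finset.filter_subset _ _)))
  obtain ⟨u, hu⟩ := Finset.card_pos.mp hpos
  have hu2 := hS u
  have hsub : S.filter (fun x => G.Adj x u) ⊆ S.erase u := by
    intro x hx
    simp only [Finset.mem_filter] at hx
    exact Finset.mem_erase.2 ⟨hx.2.ne, hx.1⟩
  have := Finset.card_le_card hsub
  have := Finset.card_erase_of_mem hu
  omega

theorem gammaW222_eq_three_iff {V : Type*} [Fintype V] (G : SimpleGraph V)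
    (hG : ∀ v, ∃ u, G.Adj v u) :
    gammaW G ![2,2,2] = 3 ↔ gammaX2T G = 3 := by
  constructor
  · intro h
    -- extract a WDom function of weight 3
    have hne : {n | ∃ f : V → Fin 3, WDom G ![2,2,2] f ∧ ∑ v, (f v : ℕ) = n}.Nonempty := by
      by_contra hne
      rw [Set.not_nonempty_iff_eq_empty] at hne
      unfold gammaW at h
      rw [hne, Nat.sInf_empty] at h
      omega
    have hmem := Nat.sInf_mem hne
    rw [show sInf {n | ∃ f : V → Fin 3, WDom G ![2,2,2] f ∧ ∑ v, (f v : ℕ) = n}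
          = gammaW G ![2,2,2] from rfl, h] at hmem
    obtain ⟨f, hf, hsum⟩ := hmem
    have hV : Nonempty V := by
      by_contra hV
      haveI := not_nonempty_iff.mp hV
      simp at hsum
    have hle1 : ∀ a, (f a : ℕ) ≤ 1 := fun a => by have := wdom_key G hf a; omega
    set S : Finset V := Finset.univ.filter (fun v => (f v : ℕ) ≠ 0) with hSdef
    have hcard : S.card = 3 := by
      have h1 : ∑ v ∈ S, (f v : ℕ) = ∑ v, (f v : ℕ) := Finset.sum_filter_ne_zero _
      have h2 : ∑ v ∈ S, (f v : ℕ) = ∑ v ∈ S, 1 := by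
        refine Finset.sum_congr rfl fun v hv => ?_
        simp only [hSdef, Finset.mem_filter] at hv
        have := hle1 v
        omega
      rw [h2, Finset.sum_const, smul_eq_mul, mul_one] at h1
      omega
    have hdom : ∀ v, 2 ≤ (S.filter (fun u => G.Adj u v)).card := by
      intro v
      have h2 := hf v
      rw [w222] at h2
      have hle : (∑ u, if G.Adj v u then (f u : ℕ) else 0)
          ≤ ∑ u, if (f u : ℕ) ≠ 0 then (if G.Adj u v then 1 else 0) else 0 := by
        refine Finset.sum_le_sum fun u _ => ?_
        by_cases h0 : (f u : ℕ) = 0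
        · simp [h0]
        · by_cases ha : G.Adj v u
          · simp only [if_pos ha, if_pos h0, if_pos ha.symm]
            exact hle1 u
          · simp [ha]
      have hcf : (S.filter (fun u => G.Adj u v)).card
          = ∑ u, if (f u : ℕ) ≠ 0 then (if G.Adj u v then 1 else 0) else 0 := by
        rw [Finset.card_filter, hSdef, Finset.sum_filter]
      omega
    -- now gammaX2T = 3
    have hmemX : (3 : ℕ) ∈ {n | ∃ S : Finset V,
        (∀ v, 2 ≤ (S.filter (fun u => G.Adj u v)).card) ∧ S.card = n} := ⟨S, hdom, hcard⟩
    have hlbX : ∀ n ∈ {n | ∃ S : Finset V,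
        (∀ v, 2 ≤ (S.filter (fun u => G.Adj u v)).card) ∧ S.card = n}, 3 ≤ n := by
      rintro n ⟨T, hT, rfl⟩
      exact x2t_lb T hT
    exact le_antisymm (Nat.sInf_le hmemX) (hlbX _ (Nat.sInf_mem ⟨3, hmemX⟩))
  · intro h
    have hne : {n | ∃ S : Finset V,
        (∀ v, 2 ≤ (S.filter (fun u => G.Adj u v)).card) ∧ S.card = n}.Nonempty := by
      by_contra hne
      rw [Set.not_nonempty_iff_eq_empty] at hne
      unfold gammaX2T at h
      rw [hne, Nat.sInf_empty] at h
      omega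
    have hmem := Nat.sInf_mem hne
    rw [show sInf {n | ∃ S : Finset V,
        (∀ v, 2 ≤ (S.filter (fun u => G.Adj u v)).card) ∧ S.card = n} = gammaX2T G from rfl,
      h] at hmem
    obtain ⟨S, hS, hcard⟩ := hmem
    have hV : Nonempty V := by
      have : 0 < S.card := by omega
      obtain ⟨u, _⟩ := Finset.card_pos.mp this
      exact ⟨u⟩
    set f : V → Fin 3 := fun v => if v ∈ S then (1 : Fin 3) else 0 with hfdef
    have hcoe : ∀ v, (f v : ℕ) = if v ∈ S then 1 else 0 := by
      intro v
      simp only [hfdef]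
      split_ifs <;> rfl
    have hWdom : WDom G ![2,2,2] f := by
      intro v
      rw [w222]
      have h2 := hS v
      have hcf : (S.filter (fun u => G.Adj u v)).card
          = ∑ u ∈ S, if G.Adj u v then 1 else 0 := Finset.card_filter _ _
      have heq : ∑ u ∈ S, (if G.Adj u v then 1 else 0)
          = ∑ u ∈ S, (if G.Adj v u then (f u : ℕ) else 0) := by
        refine Finset.sum_congr rfl fun u hu => ?_
        rw [hcoe u, if_pos hu, G.adj_comm]
      have hmono : ∑ u ∈ S, (if G.Adj v u then (f u : ℕ) else 0)
          ≤ ∑ u, (if G.Adj v u then (f u : ℕ) else 0) :=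
        Finset.sum_le_sum_of_subset_of_nonneg (Finset.subset_univ S)
          (fun _ _ _ => by positivity)
      omega
    have hsum3 : ∑ v, (f v : ℕ) = 3 := by
      have : ∑ v, (f v : ℕ) = ∑ v ∈ S, 1 := by
        rw [Finset.sum_congr rfl fun v _ => hcoe v, Finset.sum_ite_mem, Finset.univ_inter]
      rw [this, Finset.sum_const, smul_eq_mul, mul_one]
      exact hcard
    have hmemW : (3 : ℕ) ∈ {n | ∃ f : V → Fin 3,
        WDom G ![2,2,2] f ∧ ∑ v, (f v : ℕ) = n} := ⟨f, hWdom, hsum3⟩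
    have hlbW : ∀ n ∈ {n | ∃ f : V → Fin 3,
        WDom G ![2,2,2] f ∧ ∑ v, (f v : ℕ) = n}, 3 ≤ n := by
      rintro n ⟨g, hg, rfl⟩
      exact wdom_lb G hg
    exact le_antisymm (Nat.sInf_le hmemW) (hlbW _ (Nat.sInf_mem ⟨3, hmemW⟩))
end
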